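/- Let 0 < a_i < c_i with a_i/c_i < 1/4 for i = 1,...,m, let w_i = 4a_i²/(√c_i - √a_i)², ŵ = max_i w_i, ĉ = max_i c_i, and define P_i*(k) = 0 if k ≥ c_i, and P_i*(k) = (√(c_i² + (4a_ic_i/k)(a_i+c_i)) - (2a_i+c_i))/(2a_i(a_i+c_i)) if w_i ≤ k < c_i. Then the total power function P(k) = Σ_i P_i*(k) is continuous and monotonically nonincreasing on [ŵ, ĉ], with P(ĉ) = 0; hence for every total power P ∈ [0, P(ŵ)] there exists k* ∈ [ŵ, ĉ] with Σ_i P_i*(k*) = P. -/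
import Mathlib

open Set

noncomputable def gfun (a c k : ℝ) : ℝ :=
  (Real.sqrt (c ^ 2 + (4 * a * c / k) * (a + c)) - (2 * a + c)) / (2 * a * (a + c))

lemma gfun_cont (a c : ℝ) : ContinuousOn (gfun a c) (Ioi 0) := by
  unfold gfun
  apply ContinuousOn.div_const
  apply ContinuousOn.sub _ continuousOn_const
  apply Real.continuous_sqrt.comp_continuousOn
  exact continuousOn_const.add
    ((continuousOn_const.div continuousOn_id (fun x hx => ne_of_gt hx)).mul continuousOn_const)

lemma gfun_anti (a c : ℝ) (ha : 0 < a) (hc : 0 < c) : AntitoneOn (gfun a c) (Ioi 0) := by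
  intro x hx y hy hxy
  unfold gfun
  have hd : (0:ℝ) < 2 * a * (a + c) := by positivity
  have hx0 : (0:ℝ) < x := hx
  have h1 : Real.sqrt (c ^ 2 + 4 * a * c / y * (a + c)) ≤
      Real.sqrt (c ^ 2 + 4 * a * c / x * (a + c)) := by
    apply Real.sqrt_le_sqrt
    gcongr
  gcongr

lemma gfun_at_c (a c : ℝ) (ha : 0 < a) (hc : 0 < c) : gfun a c c = 0 := by
  unfold gfun
  rw [show 4 * a * c / c = 4 * a by field_simp]
  rw [show c ^ 2 + 4 * a * (a + c) = (2 * a + c) ^ 2 by ring]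
  rw [Real.sqrt_sq (by positivity)]
  simp


/-- continuity and monotonicity of the water-filling total power
function k ↦ Σᵢ Pᵢ*(k) on [ŵ, ĉ], with P(ĉ) = 0, and surjectivity onto
[0, P(ŵ)]. -/
theorem waterfilling_total_power {m : ℕ}
    (a c w : Fin m → ℝ)
    (ha : ∀ i, 0 < a i) (hac : ∀ i, a i < c i)
    (hratio : ∀ i, a i / c i < 1 / 4)
    (hw : ∀ i, w i = 4 * (a i) ^ 2 / (Real.sqrt (c i) - Real.sqrt (a i)) ^ 2)
    (what chat : ℝ)
    (hwhat : IsGreatest (Set.range w) what)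
    (hchat : IsGreatest (Set.range c) chat)
    (Pstar : Fin m → ℝ → ℝ)
    (hPstar : ∀ i k, Pstar i k =
      if c i ≤ k then 0
      else (Real.sqrt ((c i) ^ 2 + (4 * a i * c i / k) * (a i + c i))
              - (2 * a i + c i)) / (2 * a i * (a i + c i))) :
    ContinuousOn (fun k => ∑ i, Pstar i k) (Icc what chat) ∧
    AntitoneOn (fun k => ∑ i, Pstar i k) (Icc what chat) ∧
    (∑ i, Pstar i chat) = 0 ∧
    ∀ P ∈ Icc (0 : ℝ) (∑ i, Pstar i what),
      ∃ k ∈ Icc what chat, (∑ i, Pstar i k) = P := by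
  obtain ⟨i0, hi0⟩ := hwhat.1
  have hc : ∀ i, 0 < c i := fun i => (ha i).trans (hac i)
  -- every w i is positive and < c i
  have hwpos : ∀ i, 0 < w i := by
    intro i
    rw [hw i]
    have hs : Real.sqrt (a i) < Real.sqrt (c i) :=
      Real.sqrt_lt_sqrt (ha i).le (hac i)
    have h0 : 0 < Real.sqrt (c i) - Real.sqrt (a i) := by linarith
    exact div_pos (by nlinarith [pow_pos (ha i) 2]) (pow_pos h0 2)
  have hwc : ∀ i, w i < c i := by
    intro i
    rw [hw i]
    set s := Real.sqrt (a i) with hs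
    set t := Real.sqrt (c i) with ht
    have hs2 : s ^ 2 = a i := Real.sq_sqrt (ha i).le
    have ht2 : t ^ 2 = c i := Real.sq_sqrt (hc i).le
    have hsnn : 0 ≤ s := Real.sqrt_nonneg _
    have htpos : 0 < t := Real.sqrt_pos.2 (hc i)
    have h4 : 4 * a i < c i := by
      have := hratio i
      rw [div_lt_iff₀ (hc i)] at this
      linarith
    have hst : s < t / 2 := by nlinarith
    have hts : t / 2 < t - s := by linarith
    rw [div_lt_iff₀ (by nlinarith)]
    have h5 : c i / 4 < (t - s) ^ 2 := by nlinarith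
    nlinarith [mul_lt_mul_of_pos_left h5 (hc i), mul_pos (ha i) (ha i)]
  have hwhat_pos : 0 < what := hi0 ▸ hwpos i0
  have hle : what ≤ chat := by
    have h1 : what = w i0 := hi0.symm
    have h2 : c i0 ≤ chat := hchat.2 ⟨i0, rfl⟩
    linarith [hwc i0]
  -- key rewriting
  have key : ∀ i, ∀ k ∈ Icc what chat, Pstar i k = gfun (a i) (c i) (min k (c i)) := by
    intro i k hk
    rw [hPstar]
    by_cases h : c i ≤ k
    · rw [if_pos h, min_eq_right h, gfun_at_c _ _ (ha i) (hc i)]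
    · rw [if_neg h, min_eq_left (le_of_not_ge h)]
      rfl
  have hmaps : ∀ i, MapsTo (fun k => min k (c i)) (Icc what chat) (Ioi (0:ℝ)) := by
    intro i k hk
    exact lt_min (lt_of_lt_of_le hwhat_pos hk.1) (hc i)
  have cont : ContinuousOn (fun k => ∑ i, Pstar i k) (Icc what chat) := by
    apply ContinuousOn.congr (f := fun k => ∑ i, gfun (a i) (c i) (min k (c i)))
    · apply continuousOn_finset_sum
      intro i _
      exact (gfun_cont (a i) (c i)).comp
        ((continuous_id.min continuous_const).continuousOn) (hmaps i)
    · intro k hk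
      exact Finset.sum_congr rfl fun i _ => key i k hk
  have anti : AntitoneOn (fun k => ∑ i, Pstar i k) (Icc what chat) := by
    intro x hx y hy hxy
    simp only
    rw [Finset.sum_congr rfl fun i _ => key i x hx,
        Finset.sum_congr rfl fun i _ => key i y hy]
    apply Finset.sum_le_sum
    intro i _
    exact gfun_anti (a i) (c i) (ha i) (hc i) (hmaps i hx) (hmaps i hy)
      (min_le_min hxy le_rfl)
  have hchat0 : (∑ i, Pstar i chat) = 0 := by
    apply Finset.sum_eq_zero
    intro i _
    rw [hPstar, if_pos (hchat.2 ⟨i, rfl⟩)]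
  refine ⟨cont, anti, hchat0, ?_⟩
  intro P hP
  have := intermediate_value_Icc' hle cont
  rw [hchat0] at this
  obtain ⟨k, hk, hfk⟩ := this hP
  exact ⟨k, hk, hfk⟩
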